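/- Let G = UT_3(F_4) be the group of upper unitriangular 3×3 matrices over the field F_4 with four elements (matrices with 1's on the diagonal and 0's below), a group of order 64. Let P_I be the subgroup of matrices whose (2,3)-entry is 0, and P_II the subgroup of matrices whose (1,2)-entry is 0. Then P_I and P_II are normal subgroups of G, each isomorphic to (Z/2)^4, and every subgroup of G isomorphic to (Z/2)^4 is equal to P_I or to P_II. -/

import Mathlib

/-- The field with four elements. -/
notation "F4" => GaloisField 2 2

/-- A `3 × 3` matrix is upper unitriangular if it has `1`s on the diagonal and
`0`s below it. -/
def IsUnitriangular (A : Matrix (Fin 3) (Fin 3) F4) : Prop :=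
  A 0 0 = 1 ∧ A 1 1 = 1 ∧ A 2 2 = 1 ∧ A 1 0 = 0 ∧ A 2 0 = 0 ∧ A 2 1 = 0

private lemma inv_mem_of_mem_submonoid {H : Type*} [Group H] [Finite H]
    (S : Submonoid H) {x : H} (hx : x ∈ S) : x⁻¹ ∈ S := by
  have hpos : 0 < orderOf x := orderOf_pos x
  have h1 : x ^ orderOf x = 1 := pow_orderOf_eq_one x
  have hinv : x⁻¹ = x ^ (orderOf x - 1) := by
    apply inv_eq_of_mul_eq_one_right
    calc x * x ^ (orderOf x - 1) = x ^ (1 + (orderOf x - 1)) := by rw [pow_add, pow_one]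
    _ = 1 := by rw [Nat.add_sub_cancel' hpos, h1]
  rw [hinv]
  exact pow_mem hx _

/-- The unitriangular matrices, as a submonoid of the units of the matrix
ring. -/
noncomputable def UTMon : Submonoid (Matrix (Fin 3) (Fin 3) F4)ˣ where
  carrier := {A | IsUnitriangular A.val}
  one_mem' := by
    simp [IsUnitriangular, Matrix.one_apply]
  mul_mem' := by
    rintro a b ⟨ha00, ha11, ha22, ha10, ha20, ha21⟩ ⟨hb00, hb11, hb22, hb10, hb20, hb21⟩
    refine ⟨?_, ?_, ?_, ?_, ?_, ?_⟩ <;>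
      simp [Units.val_mul, Matrix.mul_apply, Fin.sum_univ_three,
        ha00, ha11, ha22, ha10, ha20, ha21, hb00, hb11, hb22, hb10, hb20, hb21]

/-- The group `G = UT₃(F₄)` of upper unitriangular `3 × 3` matrices over `F₄`,
a group of order 64. -/
noncomputable def UTGroup : Subgroup (Matrix (Fin 3) (Fin 3) F4)ˣ :=
  { UTMon with inv_mem' := fun hx => inv_mem_of_mem_submonoid UTMon hx }

lemma mem_UTGroup_iff {A : (Matrix (Fin 3) (Fin 3) F4)ˣ} :
    A ∈ UTGroup ↔ IsUnitriangular A.val := Iff.rfl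

/-- The subgroup `P_I ≤ G` of unitriangular matrices with vanishing
`(2,3)`-entry, as a submonoid. -/
noncomputable def PIMon : Submonoid ↥UTGroup where
  carrier := {A | ((A : (Matrix (Fin 3) (Fin 3) F4)ˣ) : Matrix (Fin 3) (Fin 3) F4) 1 2 = 0}
  one_mem' := by
    simp [Matrix.one_apply]
  mul_mem' := by
    intro a b ha hb
    obtain ⟨ha00, ha11, ha22, ha10, ha20, ha21⟩ := mem_UTGroup_iff.mp a.2
    obtain ⟨hb00, hb11, hb22, hb10, hb20, hb21⟩ := mem_UTGroup_iff.mp b.2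
    show ((a * b : ↥UTGroup) : (Matrix (Fin 3) (Fin 3) F4)ˣ).val 1 2 = 0
    simp only [Subgroup.coe_mul, Units.val_mul, Matrix.mul_apply, Fin.sum_univ_three]
    simp_all

/-- The subgroup `P_II ≤ G` of unitriangular matrices with vanishing
`(1,2)`-entry, as a submonoid. -/
noncomputable def PIIMon : Submonoid ↥UTGroup where
  carrier := {A | ((A : (Matrix (Fin 3) (Fin 3) F4)ˣ) : Matrix (Fin 3) (Fin 3) F4) 0 1 = 0}
  one_mem' := by
    simp [Matrix.one_apply]
  mul_mem' := by
    intro a b ha hb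
    obtain ⟨ha00, ha11, ha22, ha10, ha20, ha21⟩ := mem_UTGroup_iff.mp a.2
    obtain ⟨hb00, hb11, hb22, hb10, hb20, hb21⟩ := mem_UTGroup_iff.mp b.2
    show ((a * b : ↥UTGroup) : (Matrix (Fin 3) (Fin 3) F4)ˣ).val 0 1 = 0
    simp only [Subgroup.coe_mul, Units.val_mul, Matrix.mul_apply, Fin.sum_univ_three]
    simp_all

/-- `P_I`, the subgroup of matrices with vanishing `(2,3)`-entry. -/
noncomputable def PI : Subgroup ↥UTGroup :=
  { PIMon with inv_mem' := fun hx => inv_mem_of_mem_submonoid PIMon hx }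

/-- `P_II`, the subgroup of matrices with vanishing `(1,2)`-entry. -/
noncomputable def PII : Subgroup ↥UTGroup :=
  { PIIMon with inv_mem' := fun hx => inv_mem_of_mem_submonoid PIIMon hx }

-- helper lemma: groups of exponent 2, comm, card 16 are (Z/2)^4
lemma iso_Z2pow4 (H : Type*) [Group H] [Finite H]
    (hcomm : ∀ a b : H, a * b = b * a) (hsq : ∀ a : H, a * a = 1)
    (hcard : Nat.card H = 16) : Nonempty (H ≃* Multiplicative (Fin 4 → ZMod 2)) := by
  letI : CommGroup H := { (inferInstance : Group H) with mul_comm := hcomm }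
  letI : Module (ZMod 2) (Additive H) := AddCommGroup.zmodModule (by
    intro x
    show (2 : ℕ) • x = 0
    rw [two_nsmul]
    exact hsq x)
  have hfr : Module.finrank (ZMod 2) (Additive H) = 4 := by
    haveI : Fintype (Additive H) := Fintype.ofFinite _
    have hc : Fintype.card (Additive H) =
        Fintype.card (ZMod 2) ^ Module.finrank (ZMod 2) (Additive H) :=
      Module.card_eq_pow_finrank
    rw [ZMod.card] at hc
    have hc2 : Fintype.card (Additive H) = 16 := by
      rw [← Nat.card_eq_fintype_card]; exact hcard
    rw [hc2] at hc
    have h24 : (2:ℕ) ^ Module.finrank (ZMod 2) (Additive H) = 2 ^ 4 := by omega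
    exact Nat.pow_right_injective (by norm_num) h24
  have b : Module.Basis (Fin 4) (ZMod 2) (Additive H) := Module.finBasisOfFinrankEq _ _ hfr
  have e : Additive H ≃+ (Fin 4 → ZMod 2) := b.equivFun.toAddEquiv
  exact ⟨(MulEquiv.multiplicativeAdditive H).symm.trans (AddEquiv.toMultiplicative e)⟩

noncomputable section UT3aux

open Matrix

noncomputable def ent (A : ↥UTGroup) (i j : Fin 3) : F4 :=
  ((A : (Matrix (Fin 3) (Fin 3) F4)ˣ) : Matrix (Fin 3) (Fin 3) F4) i j

lemma ut' (A : ↥UTGroup) :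
    IsUnitriangular ((A : (Matrix (Fin 3) (Fin 3) F4)ˣ) : Matrix (Fin 3) (Fin 3) F4) := A.2

lemma ut_ext {A B : ↥UTGroup} (h01 : ent A 0 1 = ent B 0 1) (h02 : ent A 0 2 = ent B 0 2)
    (h12 : ent A 1 2 = ent B 1 2) : A = B := by
  obtain ⟨a00, a11, a22, a10, a20, a21⟩ := ut' A
  obtain ⟨b00, b11, b22, b10, b20, b21⟩ := ut' B
  apply Subtype.ext; apply Units.ext
  ext i j
  fin_cases i <;> fin_cases j <;>
    simp_all [ent]
lemma ent_mul01 (A B : ↥UTGroup) : ent (A * B) 0 1 = ent A 0 1 + ent B 0 1 := by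
  obtain ⟨a00, a11, a22, a10, a20, a21⟩ := ut' A
  obtain ⟨b00, b11, b22, b10, b20, b21⟩ := ut' B
  simp [ent, Matrix.mul_apply, Fin.sum_univ_three, a00, b11, b21]
  ring
lemma ent_mul02 (A B : ↥UTGroup) :
    ent (A * B) 0 2 = ent A 0 2 + ent A 0 1 * ent B 1 2 + ent B 0 2 := by
  obtain ⟨a00, a11, a22, a10, a20, a21⟩ := ut' A
  obtain ⟨b00, b11, b22, b10, b20, b21⟩ := ut' B
  simp [ent, Matrix.mul_apply, Fin.sum_univ_three, a00, b22]
  ring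
lemma ent_mul12 (A B : ↥UTGroup) : ent (A * B) 1 2 = ent A 1 2 + ent B 1 2 := by
  obtain ⟨a00, a11, a22, a10, a20, a21⟩ := ut' A
  obtain ⟨b00, b11, b22, b10, b20, b21⟩ := ut' B
  simp [ent, Matrix.mul_apply, Fin.sum_univ_three, a11, b22, a10]
  ring
lemma ent_one01 : ent (1 : ↥UTGroup) 0 1 = 0 := by simp [ent, Matrix.one_apply]
lemma ent_one02 : ent (1 : ↥UTGroup) 0 2 = 0 := by simp [ent, Matrix.one_apply]
lemma ent_one12 : ent (1 : ↥UTGroup) 1 2 = 0 := by simp [ent, Matrix.one_apply]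

lemma f4_add_self (x : F4) : x + x = 0 := by
  have : (2 : F4) = 0 := by
    have := (CharP.cast_eq_zero_iff F4 2 2).mpr dvd_rfl
    exact_mod_cast this
  calc x + x = 2 * x := by ring
  _ = 0 := by rw [this, zero_mul]

lemma ut_sq_eq_one_iff (A : ↥UTGroup) : A * A = 1 ↔ ent A 0 1 * ent A 1 2 = 0 := by
  constructor
  · intro h
    have := congrArg (fun X => ent X 0 2) h
    simp only [ent_mul02, ent_one02] at this
    linear_combination this - f4_add_self (ent A 0 2)
  · intro h
    apply ut_ext
    · rw [ent_mul01, ent_one01, f4_add_self]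
    · rw [ent_mul02, ent_one02, h]
      rw [add_comm (ent A 0 2) 0, zero_add, f4_add_self]
    · rw [ent_mul12, ent_one12, f4_add_self]

lemma mem_PI_iff {A : ↥UTGroup} : A ∈ PI ↔ ent A 1 2 = 0 := Iff.rfl
lemma mem_PII_iff {A : ↥UTGroup} : A ∈ PII ↔ ent A 0 1 = 0 := Iff.rfl

lemma ent_inv12 (A : ↥UTGroup) : ent A⁻¹ 1 2 = ent A 1 2 := by
  have h := congrArg (fun X => ent X 1 2) (mul_inv_cancel A)
  simp only [ent_mul12, ent_one12] at h
  have h2 := f4_add_self (ent A 1 2)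
  linear_combination h - h2
lemma ent_inv01 (A : ↥UTGroup) : ent A⁻¹ 0 1 = ent A 0 1 := by
  have h := congrArg (fun X => ent X 0 1) (mul_inv_cancel A)
  simp only [ent_mul01, ent_one01] at h
  have h2 := f4_add_self (ent A 0 1)
  linear_combination h - h2

lemma PI_normal : PI.Normal := by
  constructor
  intro x hx g
  rw [mem_PI_iff] at hx ⊢
  rw [ent_mul12, ent_mul12, hx, add_zero, ent_inv12, f4_add_self]
lemma PII_normal : PII.Normal := by
  constructor
  intro x hx g
  rw [mem_PII_iff] at hx ⊢
  rw [ent_mul01, ent_mul01, hx, add_zero, ent_inv01, f4_add_self]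
end UT3aux

lemma mkPI_mem (a b : F4) : IsUnitriangular (!![1,a,b;0,1,0;0,0,1]) := by
  refine ⟨?_,?_,?_,?_,?_,?_⟩ <;> simp [Matrix.vecHead, Matrix.vecTail]
lemma mkPII_mem (b c : F4) : IsUnitriangular (!![1,0,b;0,1,c;0,0,1]) := by
  refine ⟨?_,?_,?_,?_,?_,?_⟩ <;> simp [Matrix.vecHead, Matrix.vecTail]

noncomputable def mkPIu (a b : F4) : (Matrix (Fin 3) (Fin 3) F4)ˣ where
  val := !![1,a,b;0,1,0;0,0,1]
  inv := !![1,a,b;0,1,0;0,0,1]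
  val_inv := by
    ext i j
    fin_cases i <;> fin_cases j <;>
      simp [Matrix.mul_apply, Fin.sum_univ_three, Matrix.one_apply, f4_add_self, Matrix.vecHead, Matrix.vecTail]
  inv_val := by
    ext i j
    fin_cases i <;> fin_cases j <;>
      simp [Matrix.mul_apply, Fin.sum_univ_three, Matrix.one_apply, f4_add_self, Matrix.vecHead, Matrix.vecTail]

noncomputable def mkPIIu (b c : F4) : (Matrix (Fin 3) (Fin 3) F4)ˣ where
  val := !![1,0,b;0,1,c;0,0,1]
  inv := !![1,0,b;0,1,c;0,0,1]
  val_inv := by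
    ext i j
    fin_cases i <;> fin_cases j <;>
      simp [Matrix.mul_apply, Fin.sum_univ_three, Matrix.one_apply, f4_add_self, Matrix.vecHead, Matrix.vecTail]
  inv_val := by
    ext i j
    fin_cases i <;> fin_cases j <;>
      simp [Matrix.mul_apply, Fin.sum_univ_three, Matrix.one_apply, f4_add_self, Matrix.vecHead, Matrix.vecTail]

noncomputable def piEquiv : ↥PI ≃ F4 × F4 where
  toFun A := (ent A.1 0 1, ent A.1 0 2)
  invFun p := ⟨⟨mkPIu p.1 p.2, mkPI_mem p.1 p.2⟩, by show ent _ 1 2 = 0; simp [ent, mkPIu, Matrix.vecHead, Matrix.vecTail]⟩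
  left_inv A := by
    apply Subtype.ext
    apply ut_ext
    · simp [ent, mkPIu, Matrix.vecHead, Matrix.vecTail]
    · simp [ent, mkPIu, Matrix.vecHead, Matrix.vecTail]
    · rw [show ent A.1 1 2 = 0 from mem_PI_iff.mp A.2]
      simp [ent, mkPIu, Matrix.vecHead, Matrix.vecTail]
  right_inv p := by
    apply Prod.ext <;> simp [ent, mkPIu, Matrix.vecHead, Matrix.vecTail]

noncomputable def piiEquiv : ↥PII ≃ F4 × F4 where
  toFun A := (ent A.1 0 2, ent A.1 1 2)
  invFun p := ⟨⟨mkPIIu p.1 p.2, mkPII_mem p.1 p.2⟩, by show ent _ 0 1 = 0; simp [ent, mkPIIu, Matrix.vecHead, Matrix.vecTail]⟩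
  left_inv A := by
    apply Subtype.ext
    apply ut_ext
    · rw [show ent A.1 0 1 = 0 from mem_PII_iff.mp A.2]
      simp [ent, mkPIIu, Matrix.vecHead, Matrix.vecTail]
    · simp [ent, mkPIIu, Matrix.vecHead, Matrix.vecTail]
    · simp [ent, mkPIIu, Matrix.vecHead, Matrix.vecTail]
  right_inv p := by
    apply Prod.ext <;> simp [ent, mkPIIu, Matrix.vecHead, Matrix.vecTail]

lemma card_F4 : Nat.card F4 = 4 := by simpa using GaloisField.card (p:=2) 2 two_ne_zero

lemma card_PI : Nat.card ↥PI = 16 := by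
  rw [Nat.card_congr piEquiv, Nat.card_prod, card_F4]
lemma card_PII : Nat.card ↥PII = 16 := by
  rw [Nat.card_congr piiEquiv, Nat.card_prod, card_F4]

lemma comm_PI : ∀ a b : ↥PI, a * b = b * a := by
  rintro ⟨a, ha⟩ ⟨b, hb⟩
  apply Subtype.ext
  show a * b = b * a
  rw [mem_PI_iff] at ha hb
  apply ut_ext
  · rw [ent_mul01, ent_mul01]; ring
  · rw [ent_mul02, ent_mul02, ha, hb]; ring
  · rw [ent_mul12, ent_mul12]; ring
lemma comm_PII : ∀ a b : ↥PII, a * b = b * a := by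
  rintro ⟨a, ha⟩ ⟨b, hb⟩
  apply Subtype.ext
  show a * b = b * a
  rw [mem_PII_iff] at ha hb
  apply ut_ext
  · rw [ent_mul01, ent_mul01]; ring
  · rw [ent_mul02, ent_mul02, ha, hb]; ring
  · rw [ent_mul12, ent_mul12]; ring

lemma sq_PI : ∀ a : ↥PI, a * a = 1 := by
  rintro ⟨a, ha⟩
  apply Subtype.ext
  show a * a = 1
  rw [ut_sq_eq_one_iff, mem_PI_iff.mp ha, mul_zero]
lemma sq_PII : ∀ a : ↥PII, a * a = 1 := by
  rintro ⟨a, ha⟩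
  apply Subtype.ext
  show a * a = 1
  rw [ut_sq_eq_one_iff, mem_PII_iff.mp ha, zero_mul]

lemma iso_PI : Nonempty (↥PI ≃* Multiplicative (Fin 4 → ZMod 2)) :=
  iso_Z2pow4 _ comm_PI sq_PI card_PI
lemma iso_PII : Nonempty (↥PII ≃* Multiplicative (Fin 4 → ZMod 2)) :=
  iso_Z2pow4 _ comm_PII sq_PII card_PII

/-- In `G = UT₃(F₄)`: the subgroups `P_I` and `P_II` are normal, each is
isomorphic to `(Z/2)⁴`, and every subgroup of `G` isomorphic to `(Z/2)⁴`
equals `P_I` or `P_II`. -/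
theorem elementary_abelian_rank_four_subgroups_of_UT3F4 :
    PI.Normal ∧ PII.Normal ∧
    Nonempty (↥PI ≃* Multiplicative (Fin 4 → ZMod 2)) ∧
    Nonempty (↥PII ≃* Multiplicative (Fin 4 → ZMod 2)) ∧
    ∀ H : Subgroup ↥UTGroup,
      Nonempty (↥H ≃* Multiplicative (Fin 4 → ZMod 2)) → H = PI ∨ H = PII := by
  refine ⟨PI_normal, PII_normal, iso_PI, iso_PII, ?_⟩
  rintro H ⟨e⟩
  have htgt_sq : ∀ y : Multiplicative (Fin 4 → ZMod 2), y * y = 1 := by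
    intro y
    have : ∀ a : ZMod 2, a + a = 0 := by decide
    apply Multiplicative.toAdd.injective
    funext i
    exact this _
  have hcard : Nat.card ↥H = 16 := by
    rw [Nat.card_congr e.toEquiv, Nat.card_eq_fintype_card]
    simp [ZMod.card]
  have hsq : ∀ x : ↥H, x * x = 1 := by
    intro x
    apply e.injective
    rw [map_mul, map_one]
    exact htgt_sq _
  have hcomm : ∀ x y : ↥H, x * y = y * x := by
    intro x y
    apply e.injective
    rw [map_mul, map_mul, mul_comm]
  have hdich : ∀ x : ↥UTGroup, x ∈ H → ent x 0 1 = 0 ∨ ent x 1 2 = 0 := by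
    intro x hx
    have := hsq ⟨x, hx⟩
    have h2 : x * x = 1 := congrArg Subtype.val this
    exact mul_eq_zero.mp ((ut_sq_eq_one_iff x).mp h2)
  by_cases h1 : H ≤ PI
  · left
    exact Subgroup.eq_of_le_of_card_ge h1 (by rw [card_PI, hcard])
  by_cases h2 : H ≤ PII
  · right
    exact Subgroup.eq_of_le_of_card_ge h2 (by rw [card_PII, hcard])
  exfalso
  obtain ⟨x, hxH, hxPI⟩ := SetLike.not_le_iff_exists.mp h1
  obtain ⟨y, hyH, hyPII⟩ := SetLike.not_le_iff_exists.mp h2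
  have hx12 : ent x 1 2 ≠ 0 := fun h => hxPI (mem_PI_iff.mpr h)
  have hy01 : ent y 0 1 ≠ 0 := fun h => hyPII (mem_PII_iff.mpr h)
  have hx01 : ent x 0 1 = 0 := (hdich x hxH).resolve_right hx12
  have hy12 : ent y 1 2 = 0 := (hdich y hyH).resolve_left hy01
  have hc : x * y = y * x := congrArg Subtype.val (hcomm ⟨x, hxH⟩ ⟨y, hyH⟩)
  have h02 := congrArg (fun X => ent X 0 2) hc
  simp only [ent_mul02] at h02
  rw [hx01, hy12, zero_mul] at h02
  have : ent y 0 1 * ent x 1 2 = 0 := by linear_combination h02.symm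
  exact (mul_ne_zero hy01 hx12) this
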